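/- Let G be a finite group whose center Z(G) = {1, z} has order 2, and suppose G/Z(G) is an elementary abelian 2-group of cardinality 2^{2n} for a positive integer n. Let A be a maximal abelian subgroup of G, and let T be an irreducible complex representation of G on which z acts as the scalar −1. Then z ∈ A, the cardinality of A is 2^{n+1}, and the restriction of T to A is isomorphic to the direct sum, over all group homomorphisms φ : A → ℂ^× with φ(z) = −1, of the one-dimensional representation given by φ, each such φ occurring with multiplicity exactly one. -/

import Mathlib

open CategoryTheory

private lemma closure_comm' {G : Type*} [Group G] {S : Set G}
    (hS : ∀ x ∈ S, ∀ y ∈ S, x * y = y * x) :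
    ∀ x ∈ Subgroup.closure S, ∀ y ∈ Subgroup.closure S, x * y = y * x := by
  intro x hx y hy
  refine Subgroup.closure_induction₂ (p := fun a b _ _ => Commute a b)
    (fun a b ha hb => hS a ha b hb) (fun a _ => Commute.one_left a)
    (fun a _ => Commute.one_right a)
    (fun a b c _ _ _ h1 h2 => Commute.mul_left h1 h2)
    (fun a b c _ _ _ h1 h2 => Commute.mul_right h1 h2)
    (fun a b _ _ h => Commute.inv_left h)
    (fun a b _ _ h => Commute.inv_right h) hx hy

private lemma sum_units_hom_eq_zero' {H : Type*} [Group H] [Fintype H] (f : H →* ℂˣ)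
    (hf : ∃ x, f x ≠ 1) : ∑ x : H, ((f x : ℂˣ) : ℂ) = 0 := by
  obtain ⟨b, hb⟩ := hf
  have h1 : ∑ x : H, ((f (b * x) : ℂˣ) : ℂ) = ∑ x : H, ((f x : ℂˣ) : ℂ) :=
    Fintype.sum_equiv (Equiv.mulLeft b) _ _ (fun x => rfl)
  have h2 : ∑ x : H, ((f (b * x) : ℂˣ) : ℂ) = ((f b : ℂˣ) : ℂ) * ∑ x : H, ((f x : ℂˣ) : ℂ) := by
    rw [Finset.mul_sum]
    exact Finset.sum_congr rfl fun x _ => by rw [map_mul, Units.val_mul]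
  have h3 : (((f b : ℂˣ) : ℂ) - 1) * ∑ x : H, ((f x : ℂˣ) : ℂ) = 0 := by
    rw [sub_mul, one_mul, ← h2, h1, sub_self]
  rcases mul_eq_zero.mp h3 with h | h
  · exact absurd (Units.val_eq_one.mp (by linear_combination h)) hb
  · exact h

set_option maxHeartbeats 2000000 in
/-- Let `G` be a finite group whose center is `{1, z}` of order 2, with `G/Z(G)` an
elementary abelian 2-group of cardinality `2^(2n)`, `n ≥ 1`.  Let `A` be a maximal abelian
subgroup of `G` and `T` an irreducible complex representation of `G` on which `z` acts as
`-1`.  Then `z ∈ A`, `|A| = 2^(n+1)`, and the restriction of `T` to `A` decomposes as the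
direct sum of the one-dimensional representations given by the characters `φ : A → ℂˣ`
with `φ(z) = -1`, each occurring with multiplicity exactly one.  (The decomposition is
expressed by a basis of `T` indexed by such characters, each basis vector spanning the
corresponding one-dimensional `A`-subrepresentation.) -/
theorem restriction_to_maximal_abelian (n : ℕ) (hn : 0 < n)
    (G : Type) [Group G] [Finite G]
    (z : G) (hz : z ≠ 1)
    (hZ : (Subgroup.center G : Set G) = {1, z})
    (helem : ∀ g : G ⧸ Subgroup.center G, g ^ 2 = 1)
    (hcard : Nat.card (G ⧸ Subgroup.center G) = 2 ^ (2 * n))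
    (A : Subgroup G)
    (hAcomm : ∀ a ∈ A, ∀ b ∈ A, a * b = b * a)
    (hAmax : ∀ B : Subgroup G, (∀ a ∈ B, ∀ b ∈ B, a * b = b * a) → A ≤ B → B = A)
    (T : FDRep ℂ G) (hT : Simple T) (hTz : T.ρ z = -1) :
    z ∈ A ∧ Nat.card A = 2 ^ (n + 1) ∧
      ∃ b : Module.Basis {φ : A →* ℂˣ // ∀ a : A, (a : G) = z → φ a = -1} ℂ T,
        ∀ φ (a : A), T.ρ (a : G) (b φ) = ((φ.val a : ℂˣ) : ℂ) • b φ := by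
  classical
  ------------------------------------------------------------------
  -- Part 1 : group theory
  ------------------------------------------------------------------
  have hzZ : z ∈ Subgroup.center G := by
    have : z ∈ (Subgroup.center G : Set G) := by rw [hZ]; simp
    exact this
  have hzc : ∀ g : G, g * z = z * g := fun g => Subgroup.mem_center_iff.mp hzZ g
  have hzsq : z * z = 1 := by
    have h2 : z * z ∈ (Subgroup.center G : Set G) := mul_mem hzZ hzZ
    rw [hZ] at h2
    rcases h2 with h | h
    · exact h
    · exact absurd (mul_eq_left.mp h) hz
  have hQcomm : ∀ x y : G ⧸ Subgroup.center G, x * y = y * x := by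
    intro x y
    have hx' : x⁻¹ = x := inv_eq_of_mul_eq_one_left (by rw [← sq]; exact helem x)
    have hy' : y⁻¹ = y := inv_eq_of_mul_eq_one_left (by rw [← sq]; exact helem y)
    have hxy' : (x * y)⁻¹ = x * y := inv_eq_of_mul_eq_one_left (by rw [← sq]; exact helem (x*y))
    calc x * y = (x * y)⁻¹ := hxy'.symm
    _ = y⁻¹ * x⁻¹ := mul_inv_rev x y
    _ = y * x := by rw [hx', hy']
  have hcomm : ∀ g h : G, g * h = h * g ∨ g * h = z * (h * g) := by
    intro g h
    have hmem : (g * h) * (h * g)⁻¹ ∈ Subgroup.center G := by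
      rw [← QuotientGroup.eq_one_iff]
      simp only [QuotientGroup.mk_mul, QuotientGroup.mk_inv, mul_inv_eq_one]
      exact hQcomm _ _
    have hmem' : (g * h) * (h * g)⁻¹ ∈ (Subgroup.center G : Set G) := hmem
    rw [hZ] at hmem'
    rcases hmem' with h1 | h1
    · left; rwa [mul_inv_eq_one] at h1
    · right
      rw [Set.mem_singleton_iff, mul_inv_eq_iff_eq_mul] at h1
      exact h1
  have hcent : ∀ g : G, (∀ a ∈ A, g * a = a * g) → g ∈ A := by
    intro g hg
    set S : Set G := insert g ↑A with hSdef
    have hS : ∀ x ∈ S, ∀ y ∈ S, x * y = y * x := by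
      intro x hx y hy
      rcases hx with rfl | hx <;> rcases hy with rfl | hy
      · rfl
      · exact hg y hy
      · exact (hg x hx).symm
      · exact hAcomm x hx y hy
    have hB := hAmax (Subgroup.closure S) (closure_comm' hS)
      (by rw [← Subgroup.closure_eq A]; exact Subgroup.closure_mono (Set.subset_insert _ _))
    rw [← hB]
    exact Subgroup.subset_closure (Set.mem_insert _ _)
  have hzA : z ∈ A := hcent z (fun a _ => (hzc a).symm)
  have hcardZ : Nat.card (Subgroup.center G) = 2 := by
    have h2 : (Subgroup.center G : Set G).ncard = 2 := by
      rw [hZ]; exact Set.ncard_pair (Ne.symm hz)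
    rw [← Nat.card_coe_set_eq] at h2
    exact h2
  have hcardG : Nat.card G = 2 ^ (2 * n + 1) := by
    rw [Subgroup.card_eq_card_quotient_mul_card_subgroup (Subgroup.center G), hcard, hcardZ,
      pow_succ]
  have hclass : ∀ g : G, g ∉ Subgroup.center G → ∃ h : G, h * g * h⁻¹ = z * g := by
    intro g hg
    have : ∃ h : G, ¬ (h * g = g * h) := by
      by_contra hcon
      push_neg at hcon
      exact hg (Subgroup.mem_center_iff.mpr hcon)
    obtain ⟨h, hh⟩ := this
    rcases hcomm h g with h1 | h1
    · exact absurd h1 hh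
    · exact ⟨h, by rw [mul_inv_eq_iff_eq_mul, mul_assoc]; exact h1⟩
  have hzinv : z⁻¹ = z := inv_eq_of_mul_eq_one_right hzsq
  ------------------------------------------------------------------
  -- Part 2 : character theory, dimension of T
  ------------------------------------------------------------------
  letI fG : Fintype G := Fintype.ofFinite G
  set d : ℕ := Module.finrank ℂ T with hd
  set χ : G → ℂ := T.character with hχdef
  have hχtr : ∀ g : G, LinearMap.trace ℂ _ (T.ρ g) = χ g := fun _ => rfl
  have hχzmul : ∀ g : G, χ (z * g) = - χ g := by
    intro g
    rw [← hχtr, ← hχtr]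
    rw [map_mul, hTz, neg_one_mul, map_neg]
  have hχ0 : ∀ g : G, g ∉ Subgroup.center G → χ g = 0 := by
    intro g hg
    obtain ⟨h, hh⟩ := hclass g hg
    have h1 : χ (h * g * h⁻¹) = χ g := FDRep.char_conj T g h
    rw [hh, hχzmul] at h1
    linear_combination -h1 / 2
  have hχ1 : χ 1 = (d : ℂ) := FDRep.char_one T
  have hχz : χ z = -(d : ℂ) := by
    have := hχzmul 1
    rw [mul_one, hχ1] at this
    exact this
  -- orthogonality
  letI hinv : Invertible ((Fintype.card G : ℂ)) :=
    invertibleOfNonzero (Nat.cast_ne_zero.mpr Fintype.card_ne_zero)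
  haveI := hT
  letI hinvN : Invertible ((Nat.card G : ℂ)) :=
    invertibleOfNonzero (Nat.cast_ne_zero.mpr Nat.card_pos.ne')
  have horth := FDRep.char_orthonormal (k := ℂ) (G := G) T T
  rw [if_pos ⟨Iso.refl T⟩] at horth
  have hsumG : ∑ g : G, χ g * χ g⁻¹ = (Nat.card G : ℂ) := by
    rw [Nat.card_eq_fintype_card]
    calc ∑ g : G, χ g * χ g⁻¹
        = (Fintype.card G : ℂ) * (⅟(Fintype.card G : ℂ) • ∑ g : G, χ g * χ g⁻¹) := by
          rw [smul_eq_mul, ← mul_assoc, mul_invOf_self, one_mul]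
      _ = (Fintype.card G : ℂ) := by
          rw [show (⅟(Fintype.card G : ℂ) • ∑ g : G, χ g * χ g⁻¹ : ℂ) = 1 from by
            rw [smul_eq_mul, invOf_eq_inv, ← Nat.card_eq_fintype_card]; exact_mod_cast horth, mul_one]
  have hsum2 : ∑ g : G, χ g * χ g⁻¹ = 2 * (d : ℂ) ^ 2 := by
    have hstep : ∑ g : G, χ g * χ g⁻¹ = ∑ g ∈ ({1, z} : Finset G), χ g * χ g⁻¹ := by
      refine (Finset.sum_subset (Finset.subset_univ _) ?_).symm
      intro x _ hx
      simp only [Finset.mem_insert, Finset.mem_singleton, not_or] at hx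
      have hxc : x ∉ Subgroup.center G := by
        intro hmem
        have : x ∈ (Subgroup.center G : Set G) := hmem
        rw [hZ] at this
        rcases this with h | h
        · exact hx.1 h
        · exact hx.2 h
      rw [hχ0 x hxc, zero_mul]
    rw [hstep, Finset.sum_pair (Ne.symm hz), inv_one, hzinv, hχ1, hχz]
    ring
  have hdn : d = 2 ^ n := by
    have hc : 2 * (d : ℂ) ^ 2 = ((2 ^ (2 * n + 1) : ℕ) : ℂ) := by
      rw [← hsum2, hsumG, hcardG]
    have hnat : 2 * d ^ 2 = 2 ^ (2 * n + 1) := by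
      have := hc
      push_cast at this
      exact_mod_cast this
    have hsq : d ^ 2 = (2 ^ n) ^ 2 := by
      have h2 : 2 * d ^ 2 = 2 * (2 ^ n) ^ 2 := by
        rw [hnat, ← pow_mul, pow_succ, mul_comm ((2:ℕ) ^ (2*n)) 2, mul_comm n 2]
      exact Nat.eq_of_mul_eq_mul_left (by norm_num) h2
    exact Nat.pow_left_injective (by norm_num) hsq
  have hdpos : 0 < d := by rw [hdn]; positivity
  ------------------------------------------------------------------
  -- Part 3 : duality for A
  ------------------------------------------------------------------
  letI fA : Fintype A := Fintype.ofFinite A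
  letI commA : CommGroup A :=
    { (inferInstance : Group A) with
      mul_comm := fun a b => Subtype.ext (hAcomm ↑a a.2 ↑b b.2) }
  haveI hexpA : NeZero ((Monoid.exponent A : ℂ)) :=
    ⟨Nat.cast_ne_zero.mpr Monoid.exponent_ne_zero_of_finite⟩
  letI hroots : HasEnoughRootsOfUnity ℂ (Monoid.exponent A) :=
    IsSepClosed.hasEnoughRootsOfUnity ℂ (Monoid.exponent A)
  obtain ⟨eDual⟩ := CommGroup.monoidHom_mulEquiv_of_hasEnoughRootsOfUnity A ℂ
  letI : Finite (A →* ℂˣ) := Finite.of_equiv A eDual.toEquiv.symm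
  letI fD : Fintype (A →* ℂˣ) := Fintype.ofFinite _
  have hcard_dual : Nat.card (A →* ℂˣ) = Nat.card A := Nat.card_congr eDual.toEquiv
  have hsep : ∀ a : A, a ≠ 1 → ∃ φ : A →* ℂˣ, φ a ≠ 1 := fun a ha =>
    CommGroup.exists_apply_ne_one_of_hasEnoughRootsOfUnity A ℂ ha
  have hcA : ((Nat.card A : ℂ)) ≠ 0 := Nat.cast_ne_zero.mpr Nat.card_pos.ne'
  ------------------------------------------------------------------
  -- Part 4 : the idempotents e φ
  ------------------------------------------------------------------
  set zA : A := ⟨z, hzA⟩ with hzAdef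
  set e : (A →* ℂˣ) → (Module.End ℂ T) := fun φ =>
    (Nat.card A : ℂ)⁻¹ • ∑ a : A, ((φ a⁻¹ : ℂˣ) : ℂ) • T.ρ (a : G) with hedef
  -- reindexing lemma
  have hre : ∀ (φ : A →* ℂˣ) (bb : A),
      ∑ a : A, ((φ a⁻¹ : ℂˣ) : ℂ) • T.ρ ((bb * a : A) : G) =
        ((φ bb : ℂˣ) : ℂ) • ∑ a : A, ((φ a⁻¹ : ℂˣ) : ℂ) • T.ρ (a : G) := by
    intro φ bb
    rw [Finset.smul_sum]
    refine Fintype.sum_equiv (Equiv.mulLeft bb) _ _ ?_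
    intro a
    show ((φ a⁻¹ : ℂˣ) : ℂ) • T.ρ ((bb * a : A) : G) =
      ((φ bb : ℂˣ) : ℂ) • (((φ (bb * a)⁻¹ : ℂˣ) : ℂ) • T.ρ ((bb * a : A) : G))
    rw [smul_smul]
    congr 1
    rw [← Units.val_mul, ← map_mul]
    congr 2
    rw [mul_comm bb a, mul_inv_rev, mul_inv_cancel_left]
  have key_a : ∀ (φ : A →* ℂˣ) (bb : A),
      T.ρ (bb : G) * e φ = ((φ bb : ℂˣ) : ℂ) • e φ := by
    intro φ bb
    rw [hedef]
    simp only [mul_smul_comm, Finset.mul_sum]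
    rw [smul_comm]
    congr 1
    rw [← hre φ bb]
    refine Finset.sum_congr rfl fun a _ => ?_
    congr 1
    rw [← map_mul]
    rfl
  have key_a' : ∀ (φ : A →* ℂˣ) (bb : A),
      e φ * T.ρ (bb : G) = ((φ bb : ℂˣ) : ℂ) • e φ := by
    intro φ bb
    rw [hedef]
    simp only [smul_mul_assoc, Finset.sum_mul]
    rw [smul_comm]
    congr 1
    rw [← hre φ bb]
    refine Finset.sum_congr rfl fun a _ => ?_
    congr 1
    rw [← map_mul]
    rw [show ((a : G) * (bb : G)) = ((bb * a : A) : G) from by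
      rw [Subgroup.coe_mul]; exact hAcomm ↑a a.2 ↑bb bb.2]
  have key_orth : ∀ φ ψ : (A →* ℂˣ), φ ≠ ψ → e φ * e ψ = 0 := by
    intro φ ψ hne
    have : e φ * e ψ =
        (Nat.card A : ℂ)⁻¹ • ∑ a : A, ((ψ a⁻¹ : ℂˣ) : ℂ) • (e φ * T.ρ (a : G)) := by
      conv_lhs => rw [show e ψ = (Nat.card A : ℂ)⁻¹ •
        ∑ a : A, ((ψ a⁻¹ : ℂˣ) : ℂ) • T.ρ (a : G) from rfl]
      rw [mul_smul_comm, Finset.mul_sum]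
      congr 1
      exact Finset.sum_congr rfl fun a _ => (mul_smul_comm _ _ _)
    rw [this]
    have h2 : ∀ a : A, ((ψ a⁻¹ : ℂˣ) : ℂ) • (e φ * T.ρ (a : G)) =
        (((φ * ψ⁻¹ : A →* ℂˣ) a : ℂˣ) : ℂ) • e φ := by
      intro a
      rw [key_a' φ a, smul_smul]
      congr 1
      rw [← Units.val_mul, map_inv, mul_comm]
      rfl
    simp only [h2]
    rw [← Finset.sum_smul]
    have h3 : ∑ a : A, (((φ * ψ⁻¹ : A →* ℂˣ) a : ℂˣ) : ℂ) = 0 := by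
      apply sum_units_hom_eq_zero'
      have : ∃ a : A, φ a ≠ ψ a := by
        by_contra hcon
        push_neg at hcon
        exact hne (MonoidHom.ext hcon)
      obtain ⟨a, ha⟩ := this
      refine ⟨a, fun hcon => ha ?_⟩
      have : φ a * (ψ a)⁻¹ = 1 := hcon
      rw [mul_inv_eq_one] at this
      exact this
    rw [h3, zero_smul, smul_zero]
  have key_idem : ∀ φ : (A →* ℂˣ), e φ * e φ = e φ := by
    intro φ
    have : e φ * e φ =
        (Nat.card A : ℂ)⁻¹ • ∑ a : A, ((φ a⁻¹ : ℂˣ) : ℂ) • (e φ * T.ρ (a : G)) := by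
      conv_lhs => rw [show e φ = (Nat.card A : ℂ)⁻¹ •
        ∑ a : A, ((φ a⁻¹ : ℂˣ) : ℂ) • T.ρ (a : G) from rfl]
      rw [mul_smul_comm, Finset.mul_sum]
      congr 1
      exact Finset.sum_congr rfl fun a _ => (mul_smul_comm _ _ _)
    rw [this]
    have h2 : ∀ a : A, ((φ a⁻¹ : ℂˣ) : ℂ) • (e φ * T.ρ (a : G)) = e φ := by
      intro a
      rw [key_a' φ a, smul_smul, ← Units.val_mul, ← map_mul, inv_mul_cancel, map_one,
        Units.val_one, one_smul]
    simp only [h2]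
    rw [Finset.sum_const, Finset.card_univ, ← Nat.card_eq_fintype_card, ← Nat.cast_smul_eq_nsmul (R := ℂ),
      smul_smul, inv_mul_cancel₀ hcA, one_smul]
  have hinner : ∀ a : A, (∑ φ : (A →* ℂˣ), ((φ a⁻¹ : ℂˣ) : ℂ)) =
      if a = 1 then (Nat.card A : ℂ) else 0 := by
    intro a
    by_cases ha : a = 1
    · subst ha
      rw [if_pos rfl]
      simp only [inv_one, map_one, Units.val_one]
      rw [Finset.sum_const, Finset.card_univ, ← Nat.card_eq_fintype_card, hcard_dual,
        nsmul_eq_mul, mul_one]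
    · rw [if_neg ha]
      have h0 := sum_units_hom_eq_zero' (MonoidHom.eval (M := A) (N := ℂˣ) a⁻¹)
        (by
          obtain ⟨ψ, hψ⟩ := hsep a⁻¹ (inv_ne_one.mpr ha)
          exact ⟨ψ, hψ⟩)
      simpa using h0
  have key_sum : ∑ φ : (A →* ℂˣ), e φ = 1 := by
    have h1 : ∑ φ : (A →* ℂˣ), e φ
        = (Nat.card A : ℂ)⁻¹ •
            ∑ a : A, (∑ φ : (A →* ℂˣ), ((φ a⁻¹ : ℂˣ) : ℂ)) • T.ρ (a : G) := by
      rw [← Finset.smul_sum]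
      congr 1
      rw [Finset.sum_comm]
      exact Finset.sum_congr rfl fun a _ => (Finset.sum_smul).symm
    rw [h1]
    simp only [hinner, ite_smul, zero_smul, Finset.sum_ite_eq', Finset.mem_univ, if_true]
    rw [show ((1 : A) : G) = 1 from rfl, map_one, smul_smul, inv_mul_cancel₀ hcA, one_smul]
  have key_z : ∀ φ : (A →* ℂˣ), φ zA ≠ -1 → e φ = 0 := by
    intro φ hφ
    have h1 := key_a φ zA
    rw [show ((zA : A) : G) = z from rfl, hTz, neg_one_mul] at h1
    have h2 : (1 + ((φ zA : ℂˣ) : ℂ)) • e φ = 0 := by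
      rw [add_smul, one_smul, ← h1, add_neg_cancel]
    have h3 : (1 + ((φ zA : ℂˣ) : ℂ)) ≠ 0 := by
      intro hc
      apply hφ
      apply Units.ext
      show ((φ zA : ℂˣ) : ℂ) = ((-1 : ℂˣ) : ℂ)
      rw [Units.val_neg, Units.val_one]
      linear_combination hc
    exact (smul_eq_zero.mp h2).resolve_left h3
  -- trace computation
  have hzA1 : zA ≠ (1 : A) := fun hc => hz (congrArg Subtype.val hc)
  have hzAinv : zA⁻¹ = zA := by
    apply inv_eq_of_mul_eq_one_right
    exact Subtype.ext hzsq
  have htre : ∀ φ : (A →* ℂˣ), φ zA = -1 →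
      LinearMap.trace ℂ _ (e φ) = (Nat.card A : ℂ)⁻¹ * (2 * d) := by
    intro φ hφ
    have h1 : LinearMap.trace ℂ _ (e φ)
        = (Nat.card A : ℂ)⁻¹ * ∑ a : A, ((φ a⁻¹ : ℂˣ) : ℂ) * χ (a : G) := by
      rw [hedef]
      simp only [map_smul, map_sum, smul_eq_mul]
      congr 1
    rw [h1]
    congr 1
    have hvan : ∀ a : A, a ∉ ({1, zA} : Finset A) → ((φ a⁻¹ : ℂˣ) : ℂ) * χ (a : G) = 0 := by
      intro a ha
      simp only [Finset.mem_insert, Finset.mem_singleton, not_or] at ha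
      have hcen : (a : G) ∉ Subgroup.center G := by
        intro hmem
        have hmem' : (a : G) ∈ (Subgroup.center G : Set G) := hmem
        rw [hZ] at hmem'
        rcases hmem' with h | h
        · exact ha.1 (Subtype.ext h)
        · exact ha.2 (Subtype.ext h)
      rw [hχ0 _ hcen, mul_zero]
    have hsub : ∑ a : A, ((φ a⁻¹ : ℂˣ) : ℂ) * χ (a : G)
        = ∑ a ∈ ({1, zA} : Finset A), ((φ a⁻¹ : ℂˣ) : ℂ) * χ (a : G) :=
      (Finset.sum_subset (Finset.subset_univ _) (fun a _ ha => hvan a ha)).symm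
    rw [hsub, Finset.sum_pair (Ne.symm hzA1)]
    rw [show ((1 : A) : G) = 1 from rfl, show ((zA : A) : G) = z from rfl]
    rw [inv_one, map_one, Units.val_one, hχ1, hχz, hzAinv, hφ]
    rw [Units.val_neg, Units.val_one]
    ring
  -- idempotents are projections
  have hproj : ∀ φ : (A →* ℂˣ), LinearMap.IsProj (LinearMap.range (e φ)) (e φ) := by
    intro φ
    refine ⟨fun x => LinearMap.mem_range_self _ x, ?_⟩
    intro x hx
    obtain ⟨y, rfl⟩ := hx
    calc e φ (e φ y) = (e φ * e φ) y := rfl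
      _ = e φ y := by rw [key_idem φ]
  have htrproj : ∀ φ : (A →* ℂˣ),
      LinearMap.trace ℂ _ (e φ) = (Module.finrank ℂ (LinearMap.range (e φ)) : ℂ) :=
    fun φ => (hproj φ).trace
  -- some nonzero idempotent exists
  have hEne : ∃ φ : (A →* ℂˣ), e φ ≠ 0 := by
    by_contra hcon
    push_neg at hcon
    have h0 := key_sum
    simp only [hcon, Finset.sum_const_zero] at h0
    have h1 := congrArg (LinearMap.trace ℂ (T : Type)) h0
    rw [map_zero, LinearMap.trace_one] at h1
    have : (d : ℂ) = 0 := by rw [← h1]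
    rw [Nat.cast_eq_zero] at this
    omega
  obtain ⟨φ₀, hφ₀ne⟩ := hEne
  have hφ₀z : φ₀ zA = -1 := by
    by_contra h
    exact hφ₀ne (key_z φ₀ h)
  -- upper bound : card A divides 2^(n+1)
  have hrpos : Module.finrank ℂ (LinearMap.range (e φ₀)) ≠ 0 := by
    intro hc
    rw [Submodule.finrank_eq_zero, LinearMap.range_eq_bot] at hc
    exact hφ₀ne hc
  have hrc : (Module.finrank ℂ (LinearMap.range (e φ₀)) : ℂ) * (Nat.card A : ℂ)
      = 2 * (d : ℂ) := by
    rw [← htrproj φ₀, htre φ₀ hφ₀z]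
    field_simp
  have hrnat : Module.finrank ℂ (LinearMap.range (e φ₀)) * Nat.card A = 2 ^ (n + 1) := by
    have : ((Module.finrank ℂ (LinearMap.range (e φ₀)) * Nat.card A : ℕ) : ℂ)
        = ((2 ^ (n + 1) : ℕ) : ℂ) := by
      push_cast
      rw [hrc, hdn]
      push_cast
      ring
    exact_mod_cast this
  have hdvd : Nat.card A ∣ 2 ^ (n + 1) := Dvd.intro_left _ hrnat
  -- lower bound : |G| ≤ |A|^2
  set c' : G → G → ℂˣ := fun g a => if g * a = a * g then 1 else -1 with hc'def
  have hne1 : (-1 : ℂˣ) ≠ 1 := by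
    intro hc
    have := congrArg Units.val hc
    norm_num at this
  have hanti : ∀ g a : G, ¬(g * a = a * g) → g * a = z * (a * g) :=
    fun g a h => (hcomm g a).resolve_left h
  have hzc' : ∀ x y : G, x * (z * y) = z * (x * y) := fun x y => by
    rw [← mul_assoc, hzc x, mul_assoc]
  have hzz : ∀ y : G, z * (z * y) = y := fun y => by
    rw [← mul_assoc, hzsq, one_mul]
  have hznotone : ∀ y : G, ¬ (y = z * y) := by
    intro y hc
    exact hz (right_eq_mul.mp hc)
  have hc'one : ∀ g, c' g 1 = 1 := fun g => if_pos (by rw [mul_one, one_mul])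
  have hc'one' : ∀ a, c' 1 a = 1 := fun a => if_pos (by rw [mul_one, one_mul])
  have hsymm : ∀ g a, c' g a = c' a g := by
    intro g a
    by_cases h : g * a = a * g
    · rw [hc'def]; simp only; rw [if_pos h, if_pos h.symm]
    · rw [hc'def]; simp only; rw [if_neg h, if_neg (fun hc => h hc.symm)]
  have hmul2 : ∀ g a b : G, c' g (a * b) = c' g a * c' g b := by
    intro g a b
    rw [hc'def]; simp only
    by_cases h1 : g * a = a * g <;> by_cases h2 : g * b = b * g
    · have hcm : g * (a * b) = (a * b) * g := by
        rw [← mul_assoc, h1, mul_assoc, h2, ← mul_assoc]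
      rw [if_pos hcm, if_pos h1, if_pos h2, one_mul]
    · have h2' := hanti g b h2
      have hx : g * (a * b) = z * ((a * b) * g) := by
        calc g * (a * b) = (g * a) * b := (mul_assoc g a b).symm
          _ = (a * g) * b := by rw [h1]
          _ = a * (g * b) := mul_assoc a g b
          _ = a * (z * (b * g)) := by rw [h2']
          _ = z * (a * (b * g)) := hzc' a (b * g)
          _ = z * ((a * b) * g) := by rw [mul_assoc]
      have hneq : ¬ (g * (a * b) = (a * b) * g) := by
        intro hc
        rw [hc] at hx
        exact hznotone _ hx
      rw [if_neg hneq, if_pos h1, if_neg h2, one_mul]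
    · have h1' := hanti g a h1
      have hx : g * (a * b) = z * ((a * b) * g) := by
        calc g * (a * b) = (g * a) * b := (mul_assoc g a b).symm
          _ = (z * (a * g)) * b := by rw [h1']
          _ = z * ((a * g) * b) := mul_assoc z (a * g) b
          _ = z * (a * (g * b)) := by rw [mul_assoc]
          _ = z * (a * (b * g)) := by rw [h2]
          _ = z * ((a * b) * g) := by rw [mul_assoc]
      have hneq : ¬ (g * (a * b) = (a * b) * g) := by
        intro hc
        rw [hc] at hx
        exact hznotone _ hx
      rw [if_neg hneq, if_neg h1, if_pos h2, mul_one]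
    · have h1' := hanti g a h1
      have h2' := hanti g b h2
      have hcm : g * (a * b) = (a * b) * g := by
        calc g * (a * b) = (g * a) * b := (mul_assoc g a b).symm
          _ = (z * (a * g)) * b := by rw [h1']
          _ = z * ((a * g) * b) := mul_assoc z (a * g) b
          _ = z * (a * (g * b)) := by rw [mul_assoc]
          _ = z * (a * (z * (b * g))) := by rw [h2']
          _ = z * (z * (a * (b * g))) := by rw [hzc' a (b * g)]
          _ = a * (b * g) := hzz _
          _ = (a * b) * g := (mul_assoc a b g).symm
      rw [if_pos hcm, if_neg h1, if_neg h2, neg_one_mul, neg_neg]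
  have hmul1 : ∀ g h a : G, c' (g * h) a = c' g a * c' h a := by
    intro g h a
    rw [hsymm (g * h) a, hmul2 a g h, hsymm a g, hsymm a h]
  let f : G →* (A →* ℂˣ) :=
    { toFun := fun g =>
        { toFun := fun a => c' g ↑a
          map_one' := hc'one g
          map_mul' := fun a b => hmul2 g ↑a ↑b }
      map_one' := MonoidHom.ext fun a => hc'one' ↑a
      map_mul' := fun g h => MonoidHom.ext fun a => hmul1 g h ↑a }
  have hkerf : f.ker = A := by
    ext g
    constructor
    · intro hg
      have h1 := MonoidHom.mem_ker.mp hg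
      apply hcent
      intro a ha
      have h2 : c' g a = 1 := by
        have := DFunLike.congr_fun h1 (⟨a, ha⟩ : A)
        exact this
      by_contra hc
      rw [hc'def] at h2
      simp only at h2
      rw [if_neg hc] at h2
      exact hne1 h2
    · intro hg
      rw [MonoidHom.mem_ker]
      ext a
      show ((c' g ↑a : ℂˣ) : ℂ) = _
      rw [hc'def]; simp only
      rw [if_pos (hAcomm g hg ↑a a.2)]
      simp
  have hcardQ : Nat.card (G ⧸ f.ker) ≤ Nat.card A := by
    rw [← hcard_dual]
    rw [Nat.card_congr (QuotientGroup.quotientKerEquivRange f).toEquiv]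
    exact Nat.card_le_card_of_injective Subtype.val Subtype.val_injective
  have hGle : Nat.card G ≤ Nat.card A * Nat.card A := by
    calc Nat.card G = Nat.card (G ⧸ f.ker) * Nat.card f.ker :=
          Subgroup.card_eq_card_quotient_mul_card_subgroup f.ker
      _ = Nat.card (G ⧸ f.ker) * Nat.card A := by rw [hkerf]
      _ ≤ Nat.card A * Nat.card A := Nat.mul_le_mul_right _ hcardQ
  obtain ⟨k, hk, hkA⟩ := (Nat.dvd_prime_pow Nat.prime_two).mp hdvd
  have h2k : 2 * n + 1 ≤ 2 * k := by
    have h1 : (2:ℕ) ^ (2 * n + 1) ≤ 2 ^ (2 * k) := by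
      rw [← hcardG]
      calc Nat.card G ≤ Nat.card A * Nat.card A := hGle
        _ = 2 ^ k * 2 ^ k := by rw [hkA]
        _ = 2 ^ (2 * k) := by rw [← pow_add, two_mul]
    exact (Nat.pow_le_pow_iff_right (by norm_num)).mp h1
  have hcardA : Nat.card A = 2 ^ (n + 1) := by
    rw [hkA]
    congr 1
    omega
  -- multiplicity one
  have htr1 : ∀ φ : (A →* ℂˣ), φ zA = -1 → LinearMap.trace ℂ _ (e φ) = 1 := by
    intro φ hφ
    rw [htre φ hφ, hcardA, hdn]
    push_cast
    rw [pow_succ]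
    have h2 : ((2:ℂ) ^ n) ≠ 0 := pow_ne_zero n two_ne_zero
    field_simp
  have hrank1 : ∀ φ : (A →* ℂˣ), φ zA = -1 →
      Module.finrank ℂ (LinearMap.range (e φ)) = 1 := by
    intro φ hφ
    have h1 := (htrproj φ).symm.trans (htr1 φ hφ)
    exact_mod_cast h1
  have hene : ∀ φ : (A →* ℂˣ), φ zA = -1 → e φ ≠ 0 := by
    intro φ hφ hc
    have h1 := hrank1 φ hφ
    rw [hc, LinearMap.range_zero, finrank_bot] at h1
    exact one_ne_zero h1.symm
  -- the basis
  have hPiff : ∀ φ : (A →* ℂˣ), (∀ a : A, (a : G) = z → φ a = -1) ↔ φ zA = -1 := by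
    intro φ
    constructor
    · intro h; exact h zA rfl
    · intro h a ha
      have : a = zA := Subtype.ext ha
      rw [this]; exact h
  letI : Fintype {φ : A →* ℂˣ // ∀ a : A, (a : G) = z → φ a = -1} := Fintype.ofFinite _
  have hvex : ∀ φ : {φ : A →* ℂˣ // ∀ a : A, (a : G) = z → φ a = -1},
      ∃ w : T, w ∈ LinearMap.range (e φ.val) ∧ w ≠ 0 := by
    intro φ
    apply Submodule.exists_mem_ne_zero_of_ne_bot
    intro hbot
    exact hene φ.val ((hPiff φ.val).mp φ.2) (LinearMap.range_eq_bot.mp hbot)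
  choose v hvmem hvne using hvex
  have hev : ∀ φ, e φ.val (v φ) = v φ := fun φ => (hproj φ.val).map_id _ (hvmem φ)
  have hact : ∀ φ (a : A), T.ρ (a : G) (v φ) = ((φ.val a : ℂˣ) : ℂ) • v φ := by
    intro φ a
    conv_lhs => rw [← hev φ]
    have h1 : T.ρ (a : G) (e φ.val (v φ)) = (T.ρ (a : G) * e φ.val) (v φ) := rfl
    rw [h1, key_a φ.val a, LinearMap.smul_apply, hev φ]
  have heof : ∀ ψ φ, ψ ≠ φ → e ψ.val (v φ) = 0 := by
    intro ψ φ hne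
    conv_lhs => rw [← hev φ]
    have h1 : e ψ.val (e φ.val (v φ)) = (e ψ.val * e φ.val) (v φ) := rfl
    rw [h1, key_orth ψ.val φ.val (fun hc => hne (Subtype.ext hc)), LinearMap.zero_apply]
  have hLI : LinearIndependent ℂ v := by
    rw [Fintype.linearIndependent_iff]
    intro g hg ψ
    have h0 := congrArg (e ψ.val) hg
    rw [map_sum, map_zero] at h0
    simp only [map_smul] at h0
    rw [Finset.sum_eq_single_of_mem ψ (Finset.mem_univ ψ)
      (fun φ _ hφ => by rw [heof ψ φ (Ne.symm hφ), smul_zero])] at h0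
    rw [hev ψ] at h0
    exact (smul_eq_zero.mp h0).resolve_right (hvne ψ)
  have hspanall : ⊤ ≤ Submodule.span ℂ (Set.range v) := by
    intro x _
    have hx : x = ∑ φ : (A →* ℂˣ), e φ x := by
      have h0 : (∑ φ : (A →* ℂˣ), e φ) x = (1 : Module.End ℂ T) x := by rw [key_sum]
      rw [LinearMap.sum_apply] at h0
      exact h0.symm
    rw [hx]
    apply Submodule.sum_mem
    intro φ _
    by_cases hφ : φ zA = -1
    · have hP : ∀ a : A, (a : G) = z → φ a = -1 := (hPiff φ).mpr hφ
      have hmem : e φ x ∈ LinearMap.range (e φ) := LinearMap.mem_range_self _ x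
      have hrange : LinearMap.range (e φ) = Submodule.span ℂ {v ⟨φ, hP⟩} := by
        refine (Submodule.eq_of_le_of_finrank_le ?_ ?_).symm
        · rw [Submodule.span_le, Set.singleton_subset_iff]
          exact hvmem ⟨φ, hP⟩
        · rw [hrank1 φ hφ, finrank_span_singleton (hvne ⟨φ, hP⟩)]
      rw [hrange] at hmem
      refine Submodule.span_mono ?_ hmem
      rw [Set.singleton_subset_iff]
      exact ⟨⟨φ, hP⟩, rfl⟩
    · rw [key_z φ hφ, LinearMap.zero_apply]
      exact Submodule.zero_mem _
  refine ⟨hzA, hcardA, Module.Basis.mk hLI hspanall, ?_⟩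
  intro φ a
  rw [Module.Basis.mk_apply]
  exact hact φ a
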